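/- Let n ≥ 0, k ≥ 1, and let c = s_{n+1} s_{n+2} ⋯ s_{n+k} ∈ B_{n+k+1}. Then in the Hecke algebra H_{p,q}(B_{n+k+1}): T_{c^{−1}} T_c = q^k T_1 + (1−q) Σ_{i=1}^{k} q^{i−1} T_{s_{n+k} ⋯ s_{n+i} ⋯ s_{n+k}}, where s_{n+k} ⋯ s_{n+i} ⋯ s_{n+k} denotes the palindromic product s_{n+k} s_{n+k−1} ⋯ s_{n+i} ⋯ s_{n+k−1} s_{n+k}. -/

import Mathlib

namespace PaperB

open scoped Classical

def B (n : ℕ) : Subgroup (Equiv.Perm ℤ) where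
  carrier := {w | (∀ i : ℤ, w (-i) = - w i) ∧ ∀ i : ℤ, (n : ℤ) < |i| → w i = i}
  one_mem' := ⟨fun _ => rfl, fun _ _ => rfl⟩
  mul_mem' := by
    rintro a b ⟨ha1, ha2⟩ ⟨hb1, hb2⟩
    refine ⟨fun i => ?_, fun i hi => ?_⟩
    · rw [Equiv.Perm.mul_apply, Equiv.Perm.mul_apply, hb1, ha1]
    · rw [Equiv.Perm.mul_apply, hb2 i hi, ha2 i hi]
  inv_mem' := by
    rintro a ⟨ha1, ha2⟩
    refine ⟨fun i => a.injective ?_, fun i hi => a.injective ?_⟩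
    · rw [Equiv.Perm.coe_inv, Equiv.apply_symm_apply, ha1, Equiv.apply_symm_apply]
    · rw [Equiv.Perm.coe_inv, Equiv.apply_symm_apply, ha2 i hi]

def t : Equiv.Perm ℤ := Equiv.swap (-1) 1

def s (i : ℕ) : Equiv.Perm ℤ :=
  Equiv.swap (i : ℤ) ((i : ℤ) + 1) * Equiv.swap (-(i : ℤ)) (-((i : ℤ) + 1))

def gens (n : ℕ) : Set (Equiv.Perm ℤ) := insert t (s '' Set.Ico 1 n)

noncomputable def len (n : ℕ) (w : Equiv.Perm ℤ) : ℕ :=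
  sInf {l | ∃ L : List (Equiv.Perm ℤ), (∀ g ∈ L, g ∈ gens n) ∧ L.prod = w ∧ L.length = l}

/-- A model of the Iwahori–Hecke algebra `H_{p,q}(Bₘ)`:  a `ℂ`-algebra `H` together with a
family `T w`, `w ∈ Bₘ`, which is linearly independent, satisfies `T 1 = 1`, and satisfies the
standard multiplication rule
`T w * T g = T (w g)` if `ℓ(w g) > ℓ(w)` and
`T w * T g = par(g) T (w g) + (1 - par(g)) T w` otherwise,
where `par t = p` and `par sᵢ = q`. -/
structure HeckeModel (m : ℕ) (p q : ℂ) (H : Type) [Ring H] [Algebra ℂ H] where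
  T : Equiv.Perm ℤ → H
  T_one : T 1 = 1
  T_mul : ∀ w ∈ B m, ∀ g ∈ gens m,
    T w * T g =
      if len m w < len m (w * g) then T (w * g)
      else (if g = t then p else q) • T (w * g) + (1 - if g = t then p else q) • T w
  free : LinearIndependent ℂ (fun w : {x // x ∈ B m} => T w.1)

/-- The element `-w`, given by `(-w)(i) = -(w i)`. -/
def negOf (w : Equiv.Perm ℤ) : Equiv.Perm ℤ := (Equiv.neg ℤ : Equiv.Perm ℤ) * w

/-- A good involution in `B_k`. -/
def Good (k : ℕ) (w : Equiv.Perm ℤ) : Prop :=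
  w ∈ B k ∧ w * w = 1 ∧ ∀ i : ℤ, 1 ≤ i → i ≤ (k : ℤ) → (w i = i ∨ w i < 0)

/-- `a(w)`: the number of `1 ≤ j ≤ m` with `w j = j`. -/
noncomputable def aFix (m : ℕ) (w : Equiv.Perm ℤ) : ℕ :=
  ((Finset.Icc (1 : ℤ) (m : ℤ)).filter fun j => w j = j).card

/-- `d(i, w)`: the number of `i < j ≤ m` with `w j = j`. -/
noncomputable def dFix (m : ℕ) (i : ℤ) (w : Equiv.Perm ℤ) : ℕ :=
  ((Finset.Ioc i (m : ℤ)).filter fun j => w j = j).card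

/-- `c(w)`: the number of `w`-tidy pairs `{i, j}`, i.e. pairs of distinct indices
`1 ≤ i, j ≤ m` with `-w i < j` and `-w j < i`. -/
noncomputable def cTidy (m : ℕ) (w : Equiv.Perm ℤ) : ℕ :=
  (((Finset.Icc (1 : ℤ) (m : ℤ)) ×ˢ (Finset.Icc (1 : ℤ) (m : ℤ))).filter
    fun pr => pr.1 < pr.2 ∧ -w pr.1 < pr.2 ∧ -w pr.2 < pr.1).card

/-- `x = t s₁ s₂ ⋯ s_k ∈ B_{k+1}`. -/
def xE (k : ℕ) : Equiv.Perm ℤ := (t :: ((List.range k).map fun j => s (j + 1))).prod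

/-- `xᵢ = t s₁ ⋯ ŝᵢ ⋯ s_k ∈ B_{k+1}` (the product with `sᵢ` omitted). -/
def xI (k i : ℕ) : Equiv.Perm ℤ :=
  (t :: ((((List.range k).map fun j => j + 1).filter fun j => j ≠ i).map s)).prod


/-- The parabolic subgroup `S_k ⊆ B_k` generated by `s₁, …, s_{k-1}`. -/
def Spar (k : ℕ) : Subgroup (Equiv.Perm ℤ) := Subgroup.closure (s '' Set.Ico 1 k)

/-- `c(-w)` for `w ∈ S_k`: the number of neat pairs of `w`, i.e. pairs `{i,j}` of distinct
indices `1 ≤ i, j ≤ k` with `w i < j` and `w j < i`. -/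
noncomputable def cNeat (k : ℕ) (w : Equiv.Perm ℤ) : ℕ :=
  (((Finset.Icc (1 : ℤ) (k : ℤ)) ×ˢ (Finset.Icc (1 : ℤ) (k : ℤ))).filter
    fun pr => pr.1 < pr.2 ∧ w pr.1 < pr.2 ∧ w pr.2 < pr.1).card

/-- The set `X_{0,k}` of distinguished (minimal length) right coset representatives of
`S_k` in `B_k`. -/
def X0 (k : ℕ) : Set (Equiv.Perm ℤ) :=
  {x | x ∈ B k ∧ ∀ u ∈ Spar k, len k x ≤ len k (u * x)}

/-- `Succ(w)` for a good involution `w ∈ G_k`. -/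
def Succ (k : ℕ) (w : Equiv.Perm ℤ) : Set (Equiv.Perm ℤ) :=
  {xE k * w * (xE k)⁻¹, xE k * w * (xE k)⁻¹ * t} ∪
    {y | ∃ i : ℕ, 1 ≤ i ∧ i ≤ k ∧ w (i : ℤ) = (i : ℤ) ∧ y = xE k * w * (xI k i)⁻¹}

/-- The element `c = s_{n+1} s_{n+2} ⋯ s_{n+k} ∈ B_{n+k+1}`. -/
def cElt (n k : ℕ) : Equiv.Perm ℤ := ((List.range k).map fun j => s (n + 1 + j)).prod

/-- The palindromic product `s_{n+k} s_{n+k-1} ⋯ s_{n+i} ⋯ s_{n+k-1} s_{n+k}`. -/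
def pal (n k i : ℕ) : Equiv.Perm ℤ :=
  (((List.range (k - i)).map fun j => s (n + k - j)) ++ [s (n + i)] ++
    ((List.range (k - i)).map fun j => s (n + i + 1 + j))).prod

/-- The parabolic subgroup `B_n × S_k` of `B_{n+k}`, generated by
`{t, s₁, …, s_{n-1}} ∪ {s_{n+1}, …, s_{n+k-1}}` (with `t` omitted when `n = 0`). -/
def P (n k : ℕ) : Subgroup (Equiv.Perm ℤ) :=
  Subgroup.closure
    ((if n = 0 then (∅ : Set (Equiv.Perm ℤ)) else {t}) ∪ s '' Set.Ico 1 n ∪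
      s '' Set.Ico (n + 1) (n + k))

/-- The factor `S_k` of `B_n × S_k`, generated by `s_{n+1}, …, s_{n+k-1}`. -/
def SparF (n k : ℕ) : Subgroup (Equiv.Perm ℤ) := Subgroup.closure (s '' Set.Ico (n + 1) (n + k))

/-- The set `X_{n,k}` of distinguished (minimal length) right coset representatives of
`B_n × S_k` in `B_{n+k}`. -/
def Xnk (n k : ℕ) : Set (Equiv.Perm ℤ) :=
  {x | x ∈ B (n + k) ∧ ∀ u ∈ P n k, len (n + k) x ≤ len (n + k) (u * x)}

/-- The strict Bruhat order on `B_m`: `x < w` iff `x ≠ w` and some reduced expression of `w`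
has a subword whose product is `x`. -/
def bruhatLT (m : ℕ) (x w : Equiv.Perm ℤ) : Prop :=
  x ≠ w ∧ ∃ L : List (Equiv.Perm ℤ), (∀ g ∈ L, g ∈ gens m) ∧ L.prod = w ∧ L.length = len m w ∧
    ∃ L' : List (Equiv.Perm ℤ), L'.Sublist L ∧ L'.prod = x

section Aux
open Equiv

lemma s_apply_def (c : ℕ) (hc : 1 ≤ c) (x : ℤ) :
    s c x = if x = (c:ℤ) then (c:ℤ)+1 else if x = (c:ℤ)+1 then (c:ℤ) else
      if x = -(c:ℤ) then -((c:ℤ)+1) else if x = -((c:ℤ)+1) then -(c:ℤ) else x := by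
  have hc' : (1:ℤ) ≤ (c:ℤ) := by exact_mod_cast hc
  simp only [s, Equiv.Perm.mul_apply, Equiv.swap_apply_def]
  split_ifs <;> omega

lemma t_apply_def (x : ℤ) : t x = if x = 1 then -1 else if x = -1 then 1 else x := by
  simp only [t, Equiv.swap_apply_def]
  split_ifs <;> omega

lemma s_apply_self_apply (c : ℕ) (hc : 1 ≤ c) (x : ℤ) : s c (s c x) = x := by
  have hc' : (1:ℤ) ≤ (c:ℤ) := by exact_mod_cast hc
  simp only [s_apply_def c hc]
  split_ifs <;> omega

lemma s_mul_self (c : ℕ) (hc : 1 ≤ c) : s c * s c = 1 := by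
  ext x
  simp only [Equiv.Perm.mul_apply, Equiv.Perm.one_apply, s_apply_self_apply c hc]

lemma s_inv (c : ℕ) (hc : 1 ≤ c) : (s c)⁻¹ = s c :=
  inv_eq_of_mul_eq_one_right (s_mul_self c hc)

lemma s_ne_t (c : ℕ) (hc : 1 ≤ c) : s c ≠ t := by
  intro h
  have h2 := congrArg (fun σ : Equiv.Perm ℤ => σ (c:ℤ)) h
  simp only [s_apply_def c hc, t_apply_def] at h2
  have hc' : (1:ℤ) ≤ (c:ℤ) := by exact_mod_cast hc
  split_ifs at h2 <;> omega

lemma mem_B_iff (m : ℕ) (w : Equiv.Perm ℤ) :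
    w ∈ B m ↔ (∀ i : ℤ, w (-i) = - w i) ∧ ∀ i : ℤ, (m : ℤ) < |i| → w i = i := Iff.rfl

lemma s_mem_B (c m : ℕ) (h1 : 1 ≤ c) (h2 : c < m) : s c ∈ B m := by
  rw [mem_B_iff]
  have h1' : (1:ℤ) ≤ (c:ℤ) := by exact_mod_cast h1
  have h2' : (c:ℤ) < (m:ℤ) := by exact_mod_cast h2
  constructor
  · intro i
    simp only [s_apply_def c h1]
    split_ifs <;> omega
  · intro i hi
    rw [lt_abs] at hi
    simp only [s_apply_def c h1]
    split_ifs <;> omega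

lemma t_mem_B (m : ℕ) (hm : 1 ≤ m) : t ∈ B m := by
  rw [mem_B_iff]
  have hm' : (1:ℤ) ≤ (m:ℤ) := by exact_mod_cast hm
  constructor
  · intro i
    simp only [t_apply_def]
    split_ifs <;> omega
  · intro i hi
    rw [lt_abs] at hi
    simp only [t_apply_def]
    split_ifs <;> omega

lemma s_mem_gens (c m : ℕ) (h1 : 1 ≤ c) (h2 : c < m) : s c ∈ gens m :=
  Set.mem_insert_iff.mpr (Or.inr ⟨c, ⟨h1, h2⟩, rfl⟩)

lemma mem_B_of_gens (m : ℕ) (hm : 1 ≤ m) {g : Equiv.Perm ℤ} (hg : g ∈ gens m) : g ∈ B m := by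
  rcases Set.mem_insert_iff.mp hg with h | ⟨c, ⟨h1, h2⟩, rfl⟩
  · exact h ▸ t_mem_B m hm
  · exact s_mem_B c m h1 h2

lemma prod_mem_B (m : ℕ) (hm : 1 ≤ m) (W : List (Equiv.Perm ℤ))
    (h : ∀ g ∈ W, g ∈ gens m) : W.prod ∈ B m := by
  induction W with
  | nil => exact one_mem _
  | cons a W ih =>
    rw [List.prod_cons]
    exact mul_mem (mem_B_of_gens m hm (h a List.mem_cons_self))
      (ih fun g hg => h g (List.mem_cons_of_mem a hg))

end Aux
section LenStat

/-- summand for the type-B length statistic -/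
def fB (w : Equiv.Perm ℤ) (p : ℤ × ℤ) : ℕ :=
  (if p.1 < p.2 ∧ w p.2 < w p.1 then 1 else 0) +
  (if p.1 ≤ p.2 ∧ w p.1 + w p.2 < 0 then 1 else 0)

/-- the type-B length statistic -/
noncomputable def LL (m : ℕ) (w : Equiv.Perm ℤ) : ℕ :=
  ∑ p ∈ (Finset.Icc (1:ℤ) (m:ℤ)) ×ˢ (Finset.Icc (1:ℤ) (m:ℤ)), fB w p

lemma LL_one (m : ℕ) : LL m 1 = 0 := by
  apply Finset.sum_eq_zero
  intro p hp
  rw [Finset.mem_product, Finset.mem_Icc, Finset.mem_Icc] at hp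
  simp only [fB]
  split_ifs <;> simp only [Equiv.Perm.one_apply] at * <;> omega

set_option maxHeartbeats 1600000 in
lemma LL_mul_s (m c : ℕ) (w : Equiv.Perm ℤ) (hc : 1 ≤ c) (hcm : c + 1 ≤ m)
    (hval : w (c:ℤ) < w ((c:ℤ)+1)) :
    LL m (w * s c) = LL m w + 1 := by
  classical
  have hc' : (1:ℤ) ≤ (c:ℤ) := by exact_mod_cast hc
  have hcm' : (c:ℤ) + 1 ≤ (m:ℤ) := by exact_mod_cast hcm
  set S := (Finset.Icc (1:ℤ) (m:ℤ)) ×ˢ (Finset.Icc (1:ℤ) (m:ℤ)) with hS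
  have hpcS : ((c:ℤ), (c:ℤ)+1) ∈ S := by
    rw [hS, Finset.mem_product, Finset.mem_Icc, Finset.mem_Icc]; constructor <;> omega
  have hpc'S : ((c:ℤ)+1, (c:ℤ)) ∈ S := by
    rw [hS, Finset.mem_product, Finset.mem_Icc, Finset.mem_Icc]; constructor <;> omega
  have hne : ((c:ℤ), (c:ℤ)+1) ≠ ((c:ℤ)+1, (c:ℤ)) := by
    intro h
    have := congrArg Prod.fst h
    simp only at this
    omega
  set S2 := (S.erase ((c:ℤ), (c:ℤ)+1)).erase ((c:ℤ)+1, (c:ℤ)) with hS2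
  have hmemS2 : ∀ p : ℤ × ℤ, p ∈ S2 ↔
      ((1 ≤ p.1 ∧ p.1 ≤ m) ∧ (1 ≤ p.2 ∧ p.2 ≤ m)) ∧
        ¬(p.1 = (c:ℤ) ∧ p.2 = (c:ℤ)+1) ∧ ¬(p.1 = (c:ℤ)+1 ∧ p.2 = (c:ℤ)) := by
    intro p
    simp only [hS2, Finset.mem_erase, hS, Finset.mem_product, Finset.mem_Icc,
      Ne, Prod.ext_iff]
    tauto
  have hsplit : ∀ v : Equiv.Perm ℤ, ∑ p ∈ S, fB v p =
      fB v ((c:ℤ), (c:ℤ)+1) + (fB v ((c:ℤ)+1, (c:ℤ)) + ∑ p ∈ S2, fB v p) := by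
    intro v
    have e1 : insert ((c:ℤ)+1, (c:ℤ)) S2 = S.erase ((c:ℤ), (c:ℤ)+1) :=
      Finset.insert_erase (Finset.mem_erase.mpr ⟨Ne.symm hne, hpc'S⟩)
    have e2 : insert ((c:ℤ), (c:ℤ)+1) (insert ((c:ℤ)+1, (c:ℤ)) S2) = S := by
      rw [e1]; exact Finset.insert_erase hpcS
    rw [← e2, Finset.sum_insert, Finset.sum_insert]
    · exact Finset.notMem_erase _ _
    · rw [Finset.mem_insert]
      rintro (h | h)
      · exact hne h
      · exact Finset.notMem_erase _ _ (Finset.mem_of_mem_erase h)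
  have scases : ∀ x : ℤ, 1 ≤ x → (x = (c:ℤ) ∧ s c x = (c:ℤ)+1) ∨
      (x = (c:ℤ)+1 ∧ s c x = (c:ℤ)) ∨ (x ≠ (c:ℤ) ∧ x ≠ (c:ℤ)+1 ∧ s c x = x) := by
    intro x hx
    have h := s_apply_def c hc x
    split_ifs at h <;> omega
  have hbij : ∑ p ∈ S2, fB (w * s c) p = ∑ p ∈ S2, fB w p := by
    apply Finset.sum_nbij' (fun p : ℤ × ℤ => (s c p.1, s c p.2))
      (fun p : ℤ × ℤ => (s c p.1, s c p.2))
    · intro p hp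
      rw [hmemS2] at hp ⊢
      obtain ⟨⟨⟨hx1, hx2⟩, hy1, hy2⟩, hn1, hn2⟩ := hp
      have Hx := scases p.1 hx1
      have Hy := scases p.2 hy1
      omega
    · intro p hp
      rw [hmemS2] at hp ⊢
      obtain ⟨⟨⟨hx1, hx2⟩, hy1, hy2⟩, hn1, hn2⟩ := hp
      have Hx := scases p.1 hx1
      have Hy := scases p.2 hy1
      omega
    · intro p hp
      simp only [s_apply_self_apply c hc]
    · intro p hp
      simp only [s_apply_self_apply c hc]
    · intro p hp
      rw [hmemS2] at hp
      obtain ⟨⟨⟨hx1, hx2⟩, hy1, hy2⟩, hn1, hn2⟩ := hp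
      have Hx := scases p.1 hx1
      have Hy := scases p.2 hy1
      simp only [fB, Equiv.Perm.mul_apply]
      have hlt : p.1 < p.2 ↔ s c p.1 < s c p.2 := by omega
      have hle : p.1 ≤ p.2 ↔ s c p.1 ≤ s c p.2 := by omega
      simp only [hlt, hle]
  have hsc1 : s c (c:ℤ) = (c:ℤ)+1 := by
    simp only [s_apply_def c hc]; split_ifs <;> omega
  have hsc2 : s c ((c:ℤ)+1) = (c:ℤ) := by
    simp only [s_apply_def c hc]; split_ifs <;> omega
  have v1 : fB (w * s c) ((c:ℤ), (c:ℤ)+1) =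
      1 + (if w (c:ℤ) + w ((c:ℤ)+1) < 0 then 1 else 0) := by
    simp only [fB, Equiv.Perm.mul_apply, hsc1, hsc2]
    split_ifs <;> omega
  have v2 : fB w ((c:ℤ), (c:ℤ)+1) = (if w (c:ℤ) + w ((c:ℤ)+1) < 0 then 1 else 0) := by
    simp only [fB]
    split_ifs <;> omega
  have v3 : fB (w * s c) ((c:ℤ)+1, (c:ℤ)) = 0 := by
    simp only [fB, Equiv.Perm.mul_apply, hsc1, hsc2]
    split_ifs <;> omega
  have v4 : fB w ((c:ℤ)+1, (c:ℤ)) = 0 := by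
    simp only [fB]
    split_ifs <;> omega
  show (∑ p ∈ S, fB (w * s c) p) = (∑ p ∈ S, fB w p) + 1
  rw [hsplit, hsplit, hbij, v1, v2, v3, v4]
  omega

lemma LL_mul_s' (m c : ℕ) (w : Equiv.Perm ℤ) (hc : 1 ≤ c) (hcm : c + 1 ≤ m)
    (hval : w ((c:ℤ)+1) < w (c:ℤ)) :
    LL m w = LL m (w * s c) + 1 := by
  have hsc1 : s c (c:ℤ) = (c:ℤ)+1 := by
    have hc' : (1:ℤ) ≤ (c:ℤ) := by exact_mod_cast hc
    simp only [s_apply_def c hc]; split_ifs <;> omega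
  have hsc2 : s c ((c:ℤ)+1) = (c:ℤ) := by
    have hc' : (1:ℤ) ≤ (c:ℤ) := by exact_mod_cast hc
    simp only [s_apply_def c hc]; split_ifs <;> omega
  have h := LL_mul_s m c (w * s c) hc hcm (by
    simp only [Equiv.Perm.mul_apply, hsc1, hsc2]; exact hval)
  rw [mul_assoc, s_mul_self c hc, mul_one] at h
  exact h

end LenStat
section WordLen

lemma LL_mul_t (m : ℕ) (w : Equiv.Perm ℤ) (hw : w (-1) = - w 1) :
    LL m (w * t) ≤ LL m w + 1 := by
  classical
  have ht1 : t (1:ℤ) = -1 := by rw [t_apply_def]; norm_num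
  have tcases : ∀ x : ℤ, 1 ≤ x → (x = 1 ∧ t x = -1) ∨ (x ≠ 1 ∧ t x = x) := by
    intro x hx
    have h := t_apply_def x
    split_ifs at h <;> omega
  set S := (Finset.Icc (1:ℤ) (m:ℤ)) ×ˢ (Finset.Icc (1:ℤ) (m:ℤ)) with hS
  have hpt : ∀ p ∈ S, fB (w * t) p ≤ fB w p + (if p = ((1:ℤ), (1:ℤ)) then 1 else 0) := by
    intro p hp
    rw [hS, Finset.mem_product, Finset.mem_Icc, Finset.mem_Icc] at hp
    obtain ⟨⟨hx1, hx2⟩, hy1, hy2⟩ := hp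
    rcases tcases p.1 hx1 with ⟨he1, ht1'⟩ | ⟨he1, ht1'⟩ <;>
      rcases tcases p.2 hy1 with ⟨he2, ht2'⟩ | ⟨he2, ht2'⟩
    · -- p = (1,1)
      have hp11 : p = ((1:ℤ), (1:ℤ)) := Prod.ext he1 he2
      rw [if_pos hp11]
      simp only [fB, Equiv.Perm.mul_apply, ht1', ht2', ht1, hw, he1, he2]
      split_ifs <;> omega
    · have hne : p ≠ ((1:ℤ), (1:ℤ)) := by
        intro h; exact he2 (congrArg Prod.snd h)
      rw [if_neg hne]
      simp only [fB, Equiv.Perm.mul_apply, ht1', ht2', ht1, hw, he1]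
      split_ifs <;> omega
    · have hne : p ≠ ((1:ℤ), (1:ℤ)) := by
        intro h; exact he1 (congrArg Prod.fst h)
      rw [if_neg hne]
      simp only [fB, Equiv.Perm.mul_apply, ht1', ht2', ht1, hw, he2]
      split_ifs <;> omega
    · have hne : p ≠ ((1:ℤ), (1:ℤ)) := by
        intro h; exact he1 (congrArg Prod.fst h)
      rw [if_neg hne]
      simp only [fB, Equiv.Perm.mul_apply, ht1', ht2']
      omega
  calc LL m (w * t) ≤ ∑ p ∈ S, (fB w p + if p = ((1:ℤ), (1:ℤ)) then 1 else 0) :=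
        Finset.sum_le_sum hpt
    _ ≤ LL m w + 1 := by
        rw [Finset.sum_add_distrib]
        have : (∑ p ∈ S, if p = ((1:ℤ), (1:ℤ)) then 1 else 0) ≤ 1 := by
          rw [Finset.sum_ite_eq' S ((1:ℤ), (1:ℤ)) (fun _ => 1)]
          split_ifs <;> omega
        exact Nat.add_le_add le_rfl this

lemma w_one_ne_zero {w : Equiv.Perm ℤ} (hw : w (-1) = - w 1) : w 1 ≠ 0 := by
  intro h
  have h2 : w (-1) = w 1 := by rw [hw, h]; norm_num
  have := w.injective h2
  omega

lemma LL_prod_le (m : ℕ) (hm : 1 ≤ m) (W : List (Equiv.Perm ℤ))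
    (h : ∀ g ∈ W, g ∈ gens m) : LL m W.prod ≤ W.length := by
  induction W using List.reverseRecOn with
  | nil => simp [LL_one]
  | append_singleton W g ih =>
    rw [List.prod_append, List.prod_singleton, List.length_append, List.length_singleton]
    have hW : ∀ x ∈ W, x ∈ gens m := fun x hx => h x (List.mem_append_left _ hx)
    have hg : g ∈ gens m := h g (List.mem_append_right _ (List.mem_singleton_self g))
    have hB : W.prod ∈ B m := prod_mem_B m hm W hW
    have hB1 : W.prod (-1) = - W.prod 1 := hB.1 1
    have ihW := ih hW
    rcases Set.mem_insert_iff.mp hg with rfl | ⟨c, ⟨h1, h2⟩, rfl⟩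
    · have := LL_mul_t m W.prod hB1
      omega
    · have hcm : c + 1 ≤ m := h2
      have hne : W.prod (c:ℤ) ≠ W.prod ((c:ℤ)+1) := by
        intro hh
        have := W.prod.injective hh
        omega
      rcases lt_or_gt_of_ne hne with hlt | hgt
      · have := LL_mul_s m c W.prod h1 hcm hlt
        omega
      · have := LL_mul_s' m c W.prod h1 hcm hgt
        omega

lemma len_eq_of_word (m : ℕ) (hm : 1 ≤ m) (w : Equiv.Perm ℤ) (W : List (Equiv.Perm ℤ))
    (hmem : ∀ g ∈ W, g ∈ gens m) (hprod : W.prod = w) (hLL : LL m w = W.length) :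
    len m w = W.length ∧ LL m w = len m w := by
  have hmem' : W.length ∈ {l | ∃ L : List (Equiv.Perm ℤ),
      (∀ g ∈ L, g ∈ gens m) ∧ L.prod = w ∧ L.length = l} := ⟨W, hmem, hprod, rfl⟩
  have hle : len m w ≤ W.length := Nat.sInf_le hmem'
  have hge : W.length ≤ len m w := by
    rw [← hLL]
    apply le_csInf ⟨W.length, hmem'⟩
    rintro l ⟨W', h1, h2, h3⟩
    calc LL m w = LL m W'.prod := by rw [h2]
      _ ≤ W'.length := LL_prod_le m hm W' h1
      _ = l := h3
  exact ⟨le_antisymm hle hge, by omega⟩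

end WordLen
section Family

def ascL (a j : ℕ) : List (Equiv.Perm ℤ) := (List.range j).map fun r => s (a + r)
def descL (b j : ℕ) : List (Equiv.Perm ℤ) := (List.range j).map fun r => s (b - r)
def asc (a j : ℕ) : Equiv.Perm ℤ := (ascL a j).prod
def desc (b j : ℕ) : Equiv.Perm ℤ := (descL b j).prod

lemma ascL_succ (a j : ℕ) : ascL a (j+1) = ascL a j ++ [s (a+j)] := by
  simp [ascL, List.range_succ]

lemma descL_succ (b j : ℕ) : descL b (j+1) = descL b j ++ [s (b-j)] := by
  simp [descL, List.range_succ]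

lemma asc_zero (a : ℕ) : asc a 0 = 1 := rfl
lemma desc_zero (b : ℕ) : desc b 0 = 1 := rfl

lemma asc_succ (a j : ℕ) : asc a (j+1) = asc a j * s (a+j) := by
  rw [asc, ascL_succ, List.prod_append, List.prod_singleton]; rfl

lemma desc_succ (b j : ℕ) : desc b (j+1) = desc b j * s (b-j) := by
  rw [desc, descL_succ, List.prod_append, List.prod_singleton]; rfl

lemma asc_fix (a j : ℕ) (ha : 1 ≤ a) (x : ℤ) (hx : 0 ≤ x)
    (h : x < (a:ℤ) ∨ (a:ℤ) + (j:ℤ) < x) : asc a j x = x := by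
  induction j with
  | zero => rfl
  | succ j ih =>
    rw [asc_succ, Equiv.Perm.mul_apply]
    have hs : s (a+j) x = x := by
      rw [s_apply_def (a+j) (by omega) x]
      split_ifs <;> push_cast at h ⊢ <;> omega
    rw [hs]
    apply ih
    push_cast at h ⊢
    omega

lemma asc_top (a j : ℕ) (ha : 1 ≤ a) (x : ℤ) (hx : x = (a:ℤ) + (j:ℤ)) :
    asc a j x = (a:ℤ) := by
  induction j generalizing x with
  | zero => rw [asc_zero]; simpa using hx
  | succ j ih =>
    rw [asc_succ, Equiv.Perm.mul_apply]
    have hs : s (a+j) x = (a:ℤ) + (j:ℤ) := by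
      rw [s_apply_def (a+j) (by omega) x]
      split_ifs <;> push_cast at hx ⊢ <;> omega
    rw [hs]
    exact ih _ rfl

lemma desc_fix (b j : ℕ) (hj : j ≤ b) (x : ℤ) (hx : 0 ≤ x)
    (h : x < (b:ℤ) - (j:ℤ) + 1 ∨ (b:ℤ) + 1 < x) : desc b j x = x := by
  induction j with
  | zero => rfl
  | succ j ih =>
    rw [desc_succ, Equiv.Perm.mul_apply]
    have hs : s (b-j) x = x := by
      rw [s_apply_def (b-j) (by omega) x]
      split_ifs <;> push_cast at h ⊢ <;> omega
    rw [hs]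
    apply ih (by omega)
    push_cast at h ⊢
    omega

lemma desc_top (b j : ℕ) (hb : 1 ≤ b) (hj : j ≤ b) (x : ℤ)
    (hx : x = (b:ℤ) - (j:ℤ) + 1) : desc b j x = (b:ℤ) + 1 := by
  induction j generalizing x with
  | zero => rw [desc_zero]; simp only [Equiv.Perm.one_apply]; omega
  | succ j ih =>
    rw [desc_succ, Equiv.Perm.mul_apply]
    have hs : s (b-j) x = (b:ℤ) - (j:ℤ) + 1 := by
      rw [s_apply_def (b-j) (by omega) x]
      split_ifs <;> push_cast at hx ⊢ <;> omega
    rw [hs]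
    exact ih (by omega) _ rfl

lemma desc_mid (b j : ℕ) (hj : j ≤ b) (x : ℤ)
    (h1 : (b:ℤ) - (j:ℤ) + 1 < x) (h2 : x ≤ (b:ℤ) + 1) : desc b j x = x - 1 := by
  induction j with
  | zero => push_cast at h1; omega
  | succ j ih =>
    rw [desc_succ, Equiv.Perm.mul_apply]
    by_cases hc : x = (b:ℤ) - (j:ℤ) + 1
    · have hs : s (b-j) x = (b:ℤ) - (j:ℤ) := by
        rw [s_apply_def (b-j) (by omega) x]
        split_ifs <;> push_cast at hc ⊢ <;> omega
      rw [hs, desc_fix b j (by omega) _ (by omega) (by push_cast; omega)]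
      omega
    · have hs : s (b-j) x = x := by
        rw [s_apply_def (b-j) (by omega) x]
        split_ifs <;> push_cast at h1 h2 hc ⊢ <;> omega
      rw [hs]
      exact ih (by omega) (by push_cast at h1 ⊢; omega)

lemma ascL_gens (m a j : ℕ) (ha : 1 ≤ a) (h : a + j ≤ m) :
    ∀ g ∈ ascL a j, g ∈ gens m := by
  intro g hg
  rw [ascL, List.mem_map] at hg
  obtain ⟨r, hr, rfl⟩ := hg
  rw [List.mem_range] at hr
  exact s_mem_gens (a+r) m (by omega) (by omega)

lemma descL_gens (m b j : ℕ) (hj : j ≤ b) (hb : b < m) :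
    ∀ g ∈ descL b j, g ∈ gens m := by
  intro g hg
  rw [descL, List.mem_map] at hg
  obtain ⟨r, hr, rfl⟩ := hg
  rw [List.mem_range] at hr
  exact s_mem_gens (b-r) m (by omega) (by omega)

lemma ascL_length (a j : ℕ) : (ascL a j).length = j := by simp [ascL]
lemma descL_length (b j : ℕ) : (descL b j).length = j := by simp [descL]

lemma desc_cons (b j : ℕ) : desc b (j+1) = s b * desc (b-1) j := by
  induction j with
  | zero => rw [desc_succ, desc_zero, desc_zero, one_mul, mul_one, Nat.sub_zero]
  | succ j ih =>
    rw [desc_succ, ih, desc_succ, mul_assoc]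
    have e : b - (j+1) = b - 1 - j := by omega
    rw [e]

lemma asc_inv (a j : ℕ) (ha : 1 ≤ a) : (asc a j)⁻¹ = desc (a+j-1) j := by
  induction j with
  | zero => rw [asc_zero, desc_zero, inv_one]
  | succ j ih =>
    rw [asc_succ, mul_inv_rev, s_inv (a+j) (by omega), ih]
    have : a + (j+1) - 1 = a + j := by omega
    rw [this, desc_cons]

end Family
section FamilyLen

def Qel (n k i j : ℕ) : Equiv.Perm ℤ := desc (n+k) (k+1-i) * asc (n+i+1) (j-i)

lemma LL_ascn (n k : ℕ) : ∀ j, j ≤ k → LL (n+k+1) (asc (n+1) j) = j := by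
  intro j
  induction j with
  | zero => intro _; exact LL_one _
  | succ j ih =>
    intro hj
    have hv : asc (n+1) j ((n+1+j : ℕ) : ℤ) < asc (n+1) j (((n+1+j : ℕ) : ℤ) + 1) := by
      rw [asc_top (n+1) j (by omega) _ (by push_cast; ring),
        asc_fix (n+1) j (by omega) _ (by push_cast; omega) (Or.inr (by push_cast; omega))]
      push_cast; omega
    rw [asc_succ, LL_mul_s (n+k+1) (n+1+j) _ (by omega) (by omega) hv, ih (by omega)]

lemma asc_mem_B (n k j : ℕ) (hj : j ≤ k) : asc (n+1) j ∈ B (n+k+1) :=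
  prod_mem_B _ (by omega) _ (ascL_gens (n+k+1) (n+1) j (by omega) (by omega))

lemma len_ascn (n k j : ℕ) (hj : j ≤ k) : len (n+k+1) (asc (n+1) j) = j := by
  have h := len_eq_of_word (n+k+1) (by omega) (asc (n+1) j) (ascL (n+1) j)
    (ascL_gens (n+k+1) (n+1) j (by omega) (by omega)) rfl
    (by rw [ascL_length]; exact LL_ascn n k j hj)
  rw [ascL_length] at h
  exact h.1

lemma LL_descn (n k : ℕ) : ∀ j, j ≤ k → LL (n+k+1) (desc (n+k) j) = j := by
  intro j
  induction j with
  | zero => intro _; exact LL_one _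
  | succ j ih =>
    intro hj
    have hv : desc (n+k) j ((n+k-j : ℕ) : ℤ) < desc (n+k) j (((n+k-j : ℕ) : ℤ) + 1) := by
      rw [desc_fix (n+k) j (by omega) _ (by omega) (Or.inl (by omega)),
        desc_top (n+k) j (by omega) (by omega) _ (by omega)]
      omega
    rw [desc_succ, LL_mul_s (n+k+1) (n+k-j) _ (by omega) (by omega) hv, ih (by omega)]

lemma desc_mem_B (n k j : ℕ) (hj : j ≤ k) : desc (n+k) j ∈ B (n+k+1) :=
  prod_mem_B _ (by omega) _ (descL_gens (n+k+1) (n+k) j (by omega) (by omega))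

lemma len_descn (n k j : ℕ) (hj : j ≤ k) : len (n+k+1) (desc (n+k) j) = j := by
  have h := len_eq_of_word (n+k+1) (by omega) (desc (n+k) j) (descL (n+k) j)
    (descL_gens (n+k+1) (n+k) j (by omega) (by omega)) rfl
    (by rw [descL_length]; exact LL_descn n k j hj)
  rw [descL_length] at h
  exact h.1

lemma Qel_diag (n k i : ℕ) : Qel n k i i = desc (n+k) (k+1-i) := by
  rw [Qel, Nat.sub_self, asc_zero, mul_one]

lemma Qv1 (n k i j : ℕ) (hi : 1 ≤ i) (hij : i ≤ j) (hjk : j ≤ k) :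
    Qel n k i j ((n+1+j : ℕ) : ℤ) = ((n+i : ℕ) : ℤ) := by
  rw [Qel, Equiv.Perm.mul_apply,
    asc_top (n+i+1) (j-i) (by omega) _ (by omega),
    desc_mid (n+k) (k+1-i) (by omega) _ (by omega) (by omega)]
  omega

lemma Qv2 (n k i j : ℕ) (hi : 1 ≤ i) (hij : i ≤ j) (hjk : j + 1 ≤ k) :
    Qel n k i j (((n+1+j : ℕ) : ℤ) + 1) = ((n+1+j : ℕ) : ℤ) := by
  rw [Qel, Equiv.Perm.mul_apply,
    asc_fix (n+i+1) (j-i) (by omega) _ (by omega) (Or.inr (by omega)),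
    desc_mid (n+k) (k+1-i) (by omega) _ (by omega) (by omega)]
  omega

lemma Qel_succ (n k i j : ℕ) (hi : 1 ≤ i) (hij : i ≤ j) :
    Qel n k i (j+1) = Qel n k i j * s (n+1+j) := by
  rw [Qel, Qel]
  have e : j+1-i = (j-i)+1 := by omega
  rw [e, asc_succ]
  have e2 : (n+i+1)+(j-i) = n+1+j := by omega
  rw [e2, mul_assoc]

lemma LL_Q (n k i : ℕ) (hi : 1 ≤ i) :
    ∀ j, i ≤ j → j ≤ k → LL (n+k+1) (Qel n k i j) = (k+1-i) + (j-i) := by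
  intro j
  induction j with
  | zero => intro h0 _; exfalso; omega
  | succ j ih =>
    intro hij hjk
    by_cases hcase : i ≤ j
    · have hv : Qel n k i j ((n+1+j : ℕ) : ℤ) < Qel n k i j (((n+1+j : ℕ) : ℤ) + 1) := by
        rw [Qv1 n k i j hi hcase (by omega), Qv2 n k i j hi hcase (by omega)]
        omega
      rw [Qel_succ n k i j hi hcase,
        LL_mul_s (n+k+1) (n+1+j) _ (by omega) (by omega) hv, ih hcase (by omega)]
      omega
    · have hie : i = j+1 := by omega
      subst hie
      rw [Qel_diag, LL_descn n k (k+1-(j+1)) (by omega)]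
      omega

def QL (n k i j : ℕ) : List (Equiv.Perm ℤ) := descL (n+k) (k+1-i) ++ ascL (n+i+1) (j-i)

lemma QL_gens (n k i j : ℕ) (hi : 1 ≤ i) (hij : i ≤ j) (hjk : j ≤ k) :
    ∀ g ∈ QL n k i j, g ∈ gens (n+k+1) := by
  intro g hg
  rw [QL, List.mem_append] at hg
  rcases hg with h | h
  · exact descL_gens (n+k+1) (n+k) (k+1-i) (by omega) (by omega) g h
  · exact ascL_gens (n+k+1) (n+i+1) (j-i) (by omega) (by omega) g h

lemma Qel_mem_B (n k i j : ℕ) (hi : 1 ≤ i) (hij : i ≤ j) (hjk : j ≤ k) :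
    Qel n k i j ∈ B (n+k+1) := by
  have h := prod_mem_B (n+k+1) (by omega) (QL n k i j) (QL_gens n k i j hi hij hjk)
  rwa [QL, List.prod_append] at h

lemma len_Q (n k i j : ℕ) (hi : 1 ≤ i) (hij : i ≤ j) (hjk : j ≤ k) :
    len (n+k+1) (Qel n k i j) = (k+1-i) + (j-i) := by
  have hlen : (QL n k i j).length = (k+1-i) + (j-i) := by
    rw [QL, List.length_append, descL_length, ascL_length]
  have h := len_eq_of_word (n+k+1) (by omega) (Qel n k i j) (QL n k i j)
    (QL_gens n k i j hi hij hjk) (by rw [QL, List.prod_append]; rfl)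
    (by rw [hlen]; exact LL_Q n k i hi j hij hjk)
  rw [hlen] at h
  exact h.1

lemma desc_step (n k j : ℕ) (hj : j + 1 ≤ k) :
    desc (n+k) (k-j) = desc (n+k) (k-j-1) * s (n+1+j) := by
  have h := desc_succ (n+k) (k-j-1)
  rw [show n+k-(k-j-1) = n+1+j from by omega] at h
  rw [← h]
  congr 1
  omega

lemma Qel_top (n k j : ℕ) (hj : j + 1 ≤ k) : Qel n k (j+1) (j+1) = desc (n+k) (k-j) := by
  rw [Qel_diag]
  congr 1
  omega

lemma cElt_eq (n k : ℕ) : cElt n k = asc (n+1) k := rfl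

lemma cElt_inv (n k : ℕ) : (cElt n k)⁻¹ = desc (n+k) k := by
  rw [cElt_eq, asc_inv (n+1) k (by omega)]
  congr 1
  omega

lemma pal_eq (n k i : ℕ) (hi : 1 ≤ i) (hik : i ≤ k) : pal n k i = Qel n k i k := by
  unfold pal
  rw [List.prod_append, List.prod_append, List.prod_singleton]
  have e1 : ((List.range (k-i)).map fun j => s (n+k-j)) = descL (n+k) (k-i) := rfl
  have e2 : ((List.range (k-i)).map fun j => s (n+i+1+j)) = ascL (n+i+1) (k-i) := rfl
  rw [e1, e2]
  show desc (n+k) (k-i) * s (n+i) * asc (n+i+1) (k-i) = Qel n k i k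
  rw [Qel]
  have e3 : k+1-i = (k-i)+1 := by omega
  rw [e3, desc_succ]
  have e4 : n+k-(k-i) = n+i := by omega
  rw [e4]

end FamilyLen
section Hecke

variable {n k : ℕ} {p q : ℂ} {H : Type} [Ring H] [Algebra ℂ H]

lemma mulT_incr (M : HeckeModel (n+k+1) p q H) {w g : Equiv.Perm ℤ}
    (hw : w ∈ B (n+k+1)) (hg : g ∈ gens (n+k+1))
    (h : len (n+k+1) w < len (n+k+1) (w * g)) : M.T w * M.T g = M.T (w * g) := by
  rw [M.T_mul w hw g hg, if_pos h]

lemma mulT_decr (M : HeckeModel (n+k+1) p q H) {w : Equiv.Perm ℤ} {c : ℕ}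
    (hw : w ∈ B (n+k+1)) (hc : 1 ≤ c) (hcm : c < n+k+1)
    (h : ¬ len (n+k+1) w < len (n+k+1) (w * s c)) :
    M.T w * M.T (s c) = q • M.T (w * s c) + (1 - q) • M.T w := by
  rw [M.T_mul w hw (s c) (s_mem_gens c (n+k+1) hc hcm), if_neg h,
    if_neg (s_ne_t c hc)]

lemma main_ind (hk : 1 ≤ k) (M : HeckeModel (n+k+1) p q H) :
    ∀ j, j ≤ k → M.T (desc (n+k) k) * M.T (asc (n+1) j) =
      (q^j) • M.T (desc (n+k) (k-j)) +
        (1-q) • ∑ i ∈ Finset.Icc (1:ℕ) j, (q^(i-1)) • M.T (Qel n k i j) := by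
  intro j
  induction j with
  | zero =>
    intro _
    rw [asc_zero, M.T_one, mul_one, Nat.sub_zero, pow_zero, one_smul,
      Finset.Icc_eq_empty (by omega), Finset.sum_empty, smul_zero, add_zero]
  | succ j ih =>
    intro hj
    have hj' : j ≤ k := by omega
    -- split off the last generator of asc
    have hTasc : M.T (asc (n+1) (j+1)) = M.T (asc (n+1) j) * M.T (s (n+1+j)) := by
      rw [mulT_incr M (asc_mem_B n k j hj') (s_mem_gens (n+1+j) (n+k+1) (by omega) (by omega))
        (by rw [len_ascn n k j hj', ← asc_succ, len_ascn n k (j+1) hj]; omega), ← asc_succ]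
    rw [hTasc, ← mul_assoc, ih hj', add_mul, smul_mul_assoc, smul_mul_assoc,
      Finset.sum_mul]
    -- desc term
    have hws : desc (n+k) (k-j) * s (n+1+j) = desc (n+k) (k-j-1) := by
      rw [desc_step n k j hj, mul_assoc, s_mul_self (n+1+j) (by omega), mul_one]
    have hdesc : M.T (desc (n+k) (k-j)) * M.T (s (n+1+j)) =
        q • M.T (desc (n+k) (k-j-1)) + (1-q) • M.T (desc (n+k) (k-j)) := by
      rw [mulT_decr M (desc_mem_B n k (k-j) (by omega)) (by omega) (by omega)
        (by rw [hws, len_descn n k (k-j) (by omega), len_descn n k (k-j-1) (by omega)]; omega),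
        hws]
    rw [hdesc]
    -- sum terms
    have hsum : ∀ i ∈ Finset.Icc (1:ℕ) j,
        (q^(i-1)) • M.T (Qel n k i j) * M.T (s (n+1+j)) =
          (q^(i-1)) • M.T (Qel n k i (j+1)) := by
      intro i hi
      rw [Finset.mem_Icc] at hi
      rw [smul_mul_assoc, mulT_incr M (Qel_mem_B n k i j hi.1 hi.2 hj')
        (s_mem_gens (n+1+j) (n+k+1) (by omega) (by omega))
        (by rw [len_Q n k i j hi.1 hi.2 hj', ← Qel_succ n k i j hi.1 hi.2,
              len_Q n k i (j+1) hi.1 (by omega) hj]; omega),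
        ← Qel_succ n k i j hi.1 hi.2]
    rw [Finset.sum_congr rfl hsum]
    -- reassemble
    rw [Finset.sum_Icc_succ_top (by omega : (1:ℕ) ≤ j+1), Nat.add_sub_cancel,
      Qel_top n k j hj, smul_add, smul_smul, smul_smul, ← pow_succ,
      mul_comm (q^j) (1-q), ← smul_smul, smul_add, Nat.sub_sub]
    abel

end Hecke
theorem tcinv_tc (n k : ℕ) (hk : 1 ≤ k) (p q : ℂ) (H : Type) [Ring H] [Algebra ℂ H]
    (M : HeckeModel (n + k + 1) p q H) :
    M.T (cElt n k)⁻¹ * M.T (cElt n k) =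
      (q ^ k) • M.T 1 +
        (1 - q) • ∑ i ∈ Finset.Icc (1 : ℕ) k, (q ^ (i - 1)) • M.T (pal n k i) := by
  have h := main_ind hk M k le_rfl
  rw [Nat.sub_self, desc_zero] at h
  have hsum : ∑ i ∈ Finset.Icc (1:ℕ) k, (q^(i-1)) • M.T (pal n k i) =
      ∑ i ∈ Finset.Icc (1:ℕ) k, (q^(i-1)) • M.T (Qel n k i k) := by
    apply Finset.sum_congr rfl
    intro i hi
    rw [Finset.mem_Icc] at hi
    rw [pal_eq n k i hi.1 hi.2]
  rw [cElt_inv n k, cElt_eq n k, hsum]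
  exact h

end PaperB
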